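/- arXiv:1906.07781 — 4 statements merged into one kernel-verified Lean document; each statement's English description precedes it below -/
import Mathlib

section
/- With the notation of the previous statement, cᵀ q ≤ (cᵀ x + bᵀ p)/2, i.e., the cost of the minimum energy solution q is at most the average of cᵀ x and bᵀ p. -/
open Matrix

theorem stmt_4 {n m : ℕ} (A : Matrix (Fin n) (Fin m) ℝ) (b : Fin n → ℝ)
    (c x : Fin m → ℝ) (hc : ∀ i, 0 < c i) (hx : ∀ i, 0 < x i) (hA : A.rank = n)
    (R Rinv : Matrix (Fin m) (Fin m) ℝ)
    (hR : R = Matrix.diagonal fun i => c i / x i)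
    (hRinv : Rinv = Matrix.diagonal fun i => (c i / x i)⁻¹)
    (p : Fin n → ℝ) (hp : p = (A * Rinv * Aᵀ)⁻¹ *ᵥ b)
    (q : Fin m → ℝ) (hq : q = Rinv *ᵥ (Aᵀ *ᵥ p)) :
    
    c ⬝ᵥ q ≤ (c ⬝ᵥ x + b ⬝ᵥ p) / 2 := by
  set d : Fin m → ℝ := fun i => (c i / x i)⁻¹ with hd
  have hdpos : ∀ i, 0 < d i := fun i => by
    have := hc i; have := hx i; positivity
  have hsurj : Function.Surjective A.mulVecLin := by
    rw [← LinearMap.range_eq_top]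
    apply Submodule.eq_top_of_finrank_eq
    rw [← Matrix.rank, hA]
    simp [Module.finrank_fintype_fun_eq_card]
  have hinj : ∀ v : Fin n → ℝ, Aᵀ *ᵥ v = 0 → v = 0 := by
    intro v hv
    obtain ⟨y, hy⟩ := hsurj v
    have h1 : v ⬝ᵥ v = 0 := by
      calc v ⬝ᵥ v = v ⬝ᵥ (A *ᵥ y) := by rw [← mulVecLin_apply, hy]
        _ = (Aᵀ *ᵥ v) ⬝ᵥ y := by
            rw [dotProduct_mulVec, ← transpose_transpose A, vecMul_transpose,
              transpose_transpose]
        _ = 0 := by rw [hv, zero_dotProduct]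
    exact dotProduct_self_eq_zero.mp h1
  -- quadratic form identity
  have hquad : ∀ v : Fin n → ℝ, v ⬝ᵥ ((A * Rinv * Aᵀ) *ᵥ v) =
      ∑ i, d i * (Aᵀ *ᵥ v) i ^ 2 := by
    intro v
    rw [← mulVec_mulVec, ← mulVec_mulVec, dotProduct_mulVec, ← transpose_transpose A,
      vecMul_transpose, transpose_transpose, hRinv]
    simp [mulVec_diagonal, dotProduct, Finset.mul_sum]
    congr 1; ext i; ring
  -- positive definiteness
  have hposdef : (A * Rinv * Aᵀ).PosDef := by
    rw [posDef_iff_dotProduct_mulVec]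
    constructor
    · rw [IsHermitian, conjTranspose_eq_transpose_of_trivial, transpose_mul, transpose_mul,
        transpose_transpose, hRinv, diagonal_transpose, Matrix.mul_assoc]
    · intro v hv
      have : star v = v := by ext i; simp
      rw [this, hquad]
      have hs : Aᵀ *ᵥ v ≠ 0 := fun h => hv (hinj v h)
      obtain ⟨j, hj⟩ := Function.ne_iff.mp hs
      apply Finset.sum_pos' (fun i _ => by have := hdpos i; positivity)
      refine ⟨j, Finset.mem_univ j, ?_⟩
      have hj' : (Aᵀ *ᵥ v) j ≠ 0 := by simpa using hj
      have h2 : 0 < (Aᵀ *ᵥ v) j ^ 2 :=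
        lt_of_le_of_ne (sq_nonneg _) (Ne.symm (pow_ne_zero 2 hj'))
      exact mul_pos (hdpos j) h2
  have hMp : (A * Rinv * Aᵀ) *ᵥ p = b := by
    rw [hp, mulVec_mulVec, Matrix.mul_nonsing_inv _ (isUnit_iff_isUnit_det _ |>.mp hposdef.isUnit),
      one_mulVec]
  -- b ⬝ᵥ p
  have hbp : b ⬝ᵥ p = ∑ i, d i * (Aᵀ *ᵥ p) i ^ 2 := by
    rw [← hMp, ← hquad]
    exact dotProduct_comm _ _
  -- c ⬝ᵥ q
  have hcq : c ⬝ᵥ q = ∑ i, x i * (Aᵀ *ᵥ p) i := by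
    rw [hq, hRinv, dotProduct]
    apply Finset.sum_congr rfl
    intro i _
    rw [mulVec_diagonal]
    have h1 : c i ≠ 0 := (hc i).ne'
    have h2 : x i ≠ 0 := (hx i).ne'
    simp only [hd, inv_div]
    field_simp
  rw [hcq, hbp]
  have hcx : c ⬝ᵥ x = ∑ i, c i * x i := rfl
  rw [hcx, ← Finset.sum_add_distrib, Finset.sum_div]
  apply Finset.sum_le_sum
  intro i _
  have h1 := hc i
  have h2 := hx i
  have h3 : d i = x i / c i := by rw [hd]; field_simp
  rw [h3]
  set s := (Aᵀ *ᵥ p) i with hs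
  have e1 : x i / c i * (c i - s) ^ 2 = c i * x i - 2 * (x i * s) + x i / c i * s ^ 2 := by
    field_simp
    ring
  have e2 : 0 ≤ x i / c i * (c i - s) ^ 2 := by positivity
  linarith
end

section
/- Let q(x) be the minimum energy solution with resistances cᵢ/xᵢ and let x* be any feasible solution of Ax = b with x* ≥ 0. Then Σᵢ x*ᵢ · (cᵢ/xᵢ) · qᵢ(x) = bᵀ p = q(x)ᵀ R q(x) ≥ 0, where p is the potential vector. -/
open Matrix

lemma aux_inj {n m : ℕ} (A : Matrix (Fin n) (Fin m) ℝ) (hA : A.rank = n) :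
    Function.Injective (Aᵀ.mulVec) := by
  have hrank : Aᵀ.rank = n := by rw [Matrix.rank_transpose, hA]
  have h := LinearMap.finrank_range_add_finrank_ker (Aᵀ.mulVecLin)
  rw [← Matrix.rank, hrank] at h
  simp only [Module.finrank_fintype_fun_eq_card, Fintype.card_fin] at h
  have hker : LinearMap.ker Aᵀ.mulVecLin = ⊥ :=
    Submodule.finrank_eq_zero.mp (by omega)
  have := LinearMap.ker_eq_bot.mp hker
  intro u v huv
  exact this huv

theorem stmt_5 {n m : ℕ} (A : Matrix (Fin n) (Fin m) ℝ) (b : Fin n → ℝ)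
    (c x : Fin m → ℝ) (hc : ∀ i, 0 < c i) (hx : ∀ i, 0 < x i) (hA : A.rank = n)
    (R Rinv : Matrix (Fin m) (Fin m) ℝ)
    (hR : R = Matrix.diagonal fun i => c i / x i)
    (hRinv : Rinv = Matrix.diagonal fun i => (c i / x i)⁻¹)
    (p : Fin n → ℝ) (hp : p = (A * Rinv * Aᵀ)⁻¹ *ᵥ b)
    (q : Fin m → ℝ) (hq : q = Rinv *ᵥ (Aᵀ *ᵥ p))
    (xstar : Fin m → ℝ) (hxstar_nonneg : ∀ i, 0 ≤ xstar i)
    (hxstar_feas : A *ᵥ xstar = b) :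
    (∑ i, xstar i * (c i / x i) * q i) = b ⬝ᵥ p ∧
    b ⬝ᵥ p = q ⬝ᵥ (R *ᵥ q) ∧
    0 ≤ b ⬝ᵥ p := by
  have hpos : ∀ i, 0 < c i / x i := fun i => div_pos (hc i) (hx i)
  have hinj := aux_inj A hA
  -- R *ᵥ q = Aᵀ *ᵥ p
  have hRq : R *ᵥ q = Aᵀ *ᵥ p := by
    rw [hq, hR, hRinv, mulVec_mulVec, diagonal_mul_diagonal]
    have h1 : (fun i => c i / x i * (c i / x i)⁻¹) = fun _ => (1:ℝ) := by
      funext i; exact mul_inv_cancel₀ (hpos i).ne'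
    rw [h1, diagonal_one, one_mulVec]
  -- M := A * Rinv * Aᵀ is positive definite
  set M := A * Rinv * Aᵀ with hM
  have hquad : ∀ v : Fin n → ℝ,
      v ⬝ᵥ (M *ᵥ v) = ∑ i, (c i / x i)⁻¹ * ((Aᵀ *ᵥ v) i)^2 := by
    intro v
    rw [hM, Matrix.mul_assoc, ← mulVec_mulVec, ← mulVec_mulVec,
      Matrix.dotProduct_mulVec, ← Matrix.mulVec_transpose, hRinv, dotProduct]
    refine Finset.sum_congr rfl fun i _ => ?_
    rw [mulVec_diagonal]
    ring
  have hMpd : M.PosDef := by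
    refine Matrix.PosDef.of_dotProduct_mulVec_pos ?_ fun v hv => ?_
    · show Mᴴ = M
      have hd : (Matrix.diagonal fun i => (c i / x i)⁻¹ : Matrix (Fin m) (Fin m) ℝ)ᴴ
          = Matrix.diagonal fun i => (c i / x i)⁻¹ := by
        rw [Matrix.diagonal_conjTranspose]; congr 1
      rw [hM, hRinv, Matrix.conjTranspose_mul, Matrix.conjTranspose_mul, hd]
      simp [Matrix.mul_assoc]
    · have hAv : Aᵀ *ᵥ v ≠ 0 := fun h => hv (hinj (by simpa using h))
      have hstar : (star v : Fin n → ℝ) = v := by simp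
      rw [hstar, hquad]
      obtain ⟨i0, hi0⟩ := Function.ne_iff.mp hAv
      refine Finset.sum_pos' (fun i _ => ?_) ⟨i0, Finset.mem_univ _, ?_⟩
      · have := hpos i
        positivity
      · have hi0' : (Aᵀ *ᵥ v) i0 ≠ 0 := by simpa using hi0
        have := hpos i0
        positivity
  have hMunit : IsUnit M := hMpd.isUnit
  have hMinv : M * M⁻¹ = 1 := Matrix.mul_nonsing_inv M (Matrix.isUnit_iff_isUnit_det M |>.mp hMunit)
  -- A *ᵥ q = b
  have hAq : A *ᵥ q = b := by
    rw [hq, hp, mulVec_mulVec, mulVec_mulVec, mulVec_mulVec, ← hM, hMinv, one_mulVec]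
  -- first equality
  have h1 : (∑ i, xstar i * (c i / x i) * q i) = b ⬝ᵥ p := by
    have : (∑ i, xstar i * (c i / x i) * q i) = xstar ⬝ᵥ (R *ᵥ q) := by
      rw [hR, dotProduct]
      refine Finset.sum_congr rfl fun i _ => ?_
      rw [mulVec_diagonal]
      ring
    rw [this, hRq, Matrix.dotProduct_mulVec, Matrix.vecMul_transpose, hxstar_feas]
  have h2 : b ⬝ᵥ p = q ⬝ᵥ (R *ᵥ q) := by
    rw [hRq, Matrix.dotProduct_mulVec, Matrix.vecMul_transpose, hAq]
  refine ⟨h1, h2, ?_⟩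
  rw [h2, hR, dotProduct]
  refine Finset.sum_nonneg fun i _ => ?_
  rw [mulVec_diagonal, show q i * (c i / x i * q i) = (c i / x i) * (q i)^2 from by ring]
  have := hpos i
  positivity
end

section
/- Let x : [0,∞) → ℝ^m_{>0} be a solution of the non-uniform Physarum dynamics ẋ = D(q(x) − x), let x* ≥ 0 be an optimal solution of the LP min cᵀx s.t. Ax = b, x ≥ 0, with support I, and define V(x) = 2 cᵀ D⁻¹ x − Σ_{i∈I} (cᵢ x*ᵢ / dᵢ) ln xᵢ. Then d/dt V(x(t)) = 2(cᵀ q(t) − cᵀ x(t)) + cᵀ x* − bᵀ p(t), where p(t) is the potential vector of the minimum energy solution q(t). -/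
open Matrix

theorem stmt_10 {n m : ℕ} (A : Matrix (Fin n) (Fin m) ℝ) (b : Fin n → ℝ)
    (c d : Fin m → ℝ) (hc : ∀ i, 0 < c i) (hd : ∀ i, 0 < d i) (hA : A.rank = n)
    (xstar : Fin m → ℝ) (hxstar_nonneg : ∀ i, 0 ≤ xstar i)
    (hxstar_feas : A *ᵥ xstar = b)
    (hxstar_opt : ∀ y : Fin m → ℝ, A *ᵥ y = b → (∀ i, 0 ≤ y i) → c ⬝ᵥ xstar ≤ c ⬝ᵥ y)
    (I : Finset (Fin m)) (hI : ∀ i, i ∈ I ↔ xstar i ≠ 0)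
    (x : ℝ → (Fin m → ℝ)) (hxpos : ∀ t, ∀ i, 0 < x t i)
    (p : ℝ → (Fin n → ℝ)) (q : ℝ → (Fin m → ℝ))
    (hp : ∀ t, p t = (A * (Matrix.diagonal fun i => (c i / x t i)⁻¹) * Aᵀ)⁻¹ *ᵥ b)
    (hq : ∀ t, q t = (Matrix.diagonal fun i => (c i / x t i)⁻¹) *ᵥ (Aᵀ *ᵥ p t))
    (hode : ∀ t, HasDerivAt x (fun i => d i * (q t i - x t i)) t)
    (V : (Fin m → ℝ) → ℝ)
    (hV : ∀ y : Fin m → ℝ,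
      V y = 2 * ∑ i, c i * y i / d i - ∑ i ∈ I, (c i * xstar i / d i) * Real.log (y i)) :
    ∀ t, HasDerivAt (fun s => V (x s))
      (2 * (c ⬝ᵥ q t - c ⬝ᵥ x t) + c ⬝ᵥ xstar - b ⬝ᵥ p t) t := by
  intro t
  have hx' : ∀ i, HasDerivAt (fun s => x s i) (d i * (q t i - x t i)) t := by
    intro i
    exact hasDerivAt_pi.mp (hode t) i
  have h1 : HasDerivAt (fun s => 2 * ∑ i, c i * x s i / d i)
      (2 * ∑ i, (c i * (q t i - x t i))) t := by
    refine HasDerivAt.const_mul 2 (HasDerivAt.fun_sum ?_)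
    intro i _
    have := ((hx' i).const_mul (c i)).div_const (d i)
    have heq : c i * (d i * (q t i - x t i)) / d i = c i * (q t i - x t i) := by
      have hd0 := (hd i).ne'
      field_simp
    rw [heq] at this
    exact this
  have h2 : HasDerivAt (fun s => ∑ i ∈ I, (c i * xstar i / d i) * Real.log (x s i))
      (∑ i ∈ I, c i * xstar i * (q t i - x t i) / x t i) t := by
    refine HasDerivAt.fun_sum ?_
    intro i _
    have := HasDerivAt.const_mul (c i * xstar i / d i)
      ((hx' i).log (ne_of_gt (hxpos t i)))
    have heq : c i * xstar i / d i * (d i * (q t i - x t i) / x t i)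
        = c i * xstar i * (q t i - x t i) / x t i := by
      have hd0 := (hd i).ne'
      have hx0 := (hxpos t i).ne'
      field_simp
    rw [heq] at this
    exact this
  have hVx : (fun s => V (x s)) = fun s =>
      2 * ∑ i, c i * x s i / d i - ∑ i ∈ I, (c i * xstar i / d i) * Real.log (x s i) := by
    funext s; rw [hV]
  have hq' : ∀ i, c i * xstar i * q t i / x t i = xstar i * (Aᵀ *ᵥ p t) i := by
    intro i
    rw [hq, Matrix.mulVec_diagonal]
    have hx0 := (hxpos t i).ne'
    have hc0 := (hc i).ne'
    field_simp
  have hkey : ∑ i ∈ I, c i * xstar i * (q t i - x t i) / x t i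
      = b ⬝ᵥ p t - c ⬝ᵥ xstar := by
    have hsplit : ∀ i ∈ I, c i * xstar i * (q t i - x t i) / x t i
        = xstar i * (Aᵀ *ᵥ p t) i - c i * xstar i := by
      intro i _
      have hx0 := (hxpos t i).ne'
      rw [mul_sub, sub_div, hq', mul_div_assoc, div_self hx0, mul_one]
    rw [Finset.sum_congr rfl hsplit, Finset.sum_sub_distrib]
    have hfull1 : ∑ i ∈ I, xstar i * (Aᵀ *ᵥ p t) i = ∑ i, xstar i * (Aᵀ *ᵥ p t) i := by
      refine Finset.sum_subset (Finset.subset_univ I) ?_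
      intro i _ hiI
      have : xstar i = 0 := by
        by_contra h
        exact hiI ((hI i).mpr h)
      simp [this]
    have hfull2 : ∑ i ∈ I, c i * xstar i = ∑ i, c i * xstar i := by
      refine Finset.sum_subset (Finset.subset_univ I) ?_
      intro i _ hiI
      have : xstar i = 0 := by
        by_contra h
        exact hiI ((hI i).mpr h)
      simp [this]
    rw [hfull1, hfull2]
    congr 1
    show xstar ⬝ᵥ (Aᵀ *ᵥ p t) = b ⬝ᵥ p t
    rw [Matrix.dotProduct_mulVec, Matrix.vecMul_transpose, hxstar_feas]
  have hsum : ∑ i, c i * (q t i - x t i) = c ⬝ᵥ q t - c ⬝ᵥ x t := by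
    simp [dotProduct, mul_sub, Finset.sum_sub_distrib]
  have hfin : 2 * (c ⬝ᵥ q t - c ⬝ᵥ x t) + c ⬝ᵥ xstar - b ⬝ᵥ p t
      = 2 * ∑ i, (c i * (q t i - x t i))
        - ∑ i ∈ I, c i * xstar i * (q t i - x t i) / x t i := by
    rw [hkey, hsum]; ring
  rw [hVx, hfin]
  exact h1.sub h2
end

section
/- Let x : [0,∞) → G be a solution of a dynamical system ẋ = f(x) with f continuous, and V : G → ℝ a C¹ function with V̇(x(t)) ≤ 0 for all t and V(x(t)) bounded below. If p is a positive limit point of the trajectory (i.e., x(tₙ) → p for some tₙ → ∞) lying in G, then V̇(p) = 0. -/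
theorem stmt_18 {m : ℕ} (G : Set (Fin m → ℝ))
    (f : (Fin m → ℝ) → (Fin m → ℝ)) (hf : Continuous f)
    (V : (Fin m → ℝ) → ℝ) (hV : ContDiff ℝ 1 V)
    (x : ℝ → (Fin m → ℝ)) (hxG : ∀ t : ℝ, 0 ≤ t → x t ∈ G)
    (hode : ∀ t : ℝ, 0 ≤ t → HasDerivAt x (f (x t)) t)
    (hVdot : ∀ t : ℝ, 0 ≤ t → fderiv ℝ V (x t) (f (x t)) ≤ 0)
    (C : ℝ) (hbelow : ∀ t : ℝ, 0 ≤ t → C ≤ V (x t))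
    (p : Fin m → ℝ) (hpG : p ∈ G)
    (tn : ℕ → ℝ) (htn_nonneg : ∀ n, 0 ≤ tn n)
    (htn : Filter.Tendsto tn Filter.atTop Filter.atTop)
    (hlim : Filter.Tendsto (fun n => x (tn n)) Filter.atTop (nhds p)) :
    fderiv ℝ V p (f p) = 0 := by
  set W : (Fin m → ℝ) → ℝ := fun y => fderiv ℝ V y (f y) with hWdef
  set g : ℝ → ℝ := fun t => V (x t) with hgdef
  have hVd : Differentiable ℝ V := hV.differentiable one_ne_zero
  have hg : ∀ t : ℝ, 0 ≤ t → HasDerivAt g (W (x t)) t := fun t ht =>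
    (hVd (x t)).hasFDerivAt.comp_hasDerivAt t (hode t ht)
  have hWc : Continuous W := (hV.continuous_fderiv one_ne_zero).clm_apply hf
  -- g is antitone on [0, ∞)
  have hganti : AntitoneOn g (Set.Ici (0:ℝ)) := by
    apply antitoneOn_of_deriv_nonpos (convex_Ici 0)
    · exact fun t ht => (hg t ht).continuousAt.continuousWithinAt
    · intro t ht
      rw [interior_Ici] at ht
      exact ((hg t ht.le).differentiableAt).differentiableWithinAt
    · intro t ht
      rw [interior_Ici] at ht
      rw [(hg t ht.le).deriv]
      exact hVdot t ht.le
  have hgx : Filter.Tendsto (fun n => g (tn n)) Filter.atTop (nhds (V p)) :=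
    (hV.continuous.tendsto p).comp hlim
  -- V p is a lower bound for g on [0, ∞)
  have hlow : ∀ t : ℝ, 0 ≤ t → V p ≤ g t := by
    intro t ht
    refine le_of_tendsto hgx ?_
    filter_upwards [htn.eventually_ge_atTop t] with n hn
    exact hganti ht (le_trans ht hn) hn
  -- W p ≤ 0
  have hWp_le : W p ≤ 0 := by
    refine le_of_tendsto ((hWc.tendsto p).comp hlim) ?_
    exact Filter.Eventually.of_forall fun n => hVdot (tn n) (htn_nonneg n)
  rcases eq_or_lt_of_le hWp_le with h | hWplt
  · exact h
  exfalso
  set ε : ℝ := -(W p) with hεdef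
  have hε : 0 < ε := by simp only [hεdef]; linarith
  -- find a radius r with W < -ε/2 on the ball
  have hev : ∀ᶠ y in nhds p, W y < -(ε/2) :=
    Filter.Tendsto.eventually_lt_const (by simp only [hεdef]; linarith) hWc.continuousAt
  obtain ⟨r, hr, hWr⟩ := Metric.eventually_nhds_iff.mp hev
  set δ : ℝ := r/2 with hδdef
  have hδ : 0 < δ := by positivity
  have hWball : ∀ y ∈ Metric.closedBall p δ, W y ≤ -(ε/2) := by
    intro y hy
    have : dist y p < r := lt_of_le_of_lt (Metric.mem_closedBall.mp hy) (by linarith)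
    exact (hWr this).le
  -- bound on f on the closed ball
  obtain ⟨M0, hM0⟩ := (isCompact_closedBall p δ).exists_bound_of_continuousOn hf.continuousOn
  set M : ℝ := max M0 1 with hMdef
  have hM1 : (1:ℝ) ≤ M := le_max_right _ _
  have hM : 0 < M := lt_of_lt_of_le one_pos hM1
  have hMb : ∀ y ∈ Metric.closedBall p δ, ‖f y‖ ≤ M := fun y hy =>
    (hM0 y hy).trans (le_max_left _ _)
  set h : ℝ := δ / (4 * M) with hhdef
  have hh : 0 < h := by positivity
  -- choose a good index n
  have hev1 : ∀ᶠ n in Filter.atTop, dist (x (tn n)) p < δ/4 := by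
    have := Metric.tendsto_nhds.mp hlim (δ/4) (by positivity)
    exact this
  have hev2 : ∀ᶠ n in Filter.atTop, g (tn n) < V p + ε/2 * h :=
    Filter.Tendsto.eventually_lt_const (by nlinarith) hgx
  obtain ⟨n, h1, h2⟩ := (hev1.and hev2).exists
  set a : ℝ := tn n with hadef
  have ha0 : 0 ≤ a := htn_nonneg n
  set b : ℝ := a + h with hbdef
  -- key decrease estimate
  have key : ∀ c, a ≤ c → (∀ s ∈ Set.Icc a c, x s ∈ Metric.closedBall p δ) →
      g c + ε/2 * c ≤ g a + ε/2 * a := by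
    intro c hac hball
    have hd : ∀ t : ℝ, 0 ≤ t → HasDerivAt (fun t => g t + ε/2 * t) (W (x t) + ε/2) t := by
      intro t ht
      have := (hg t ht).add ((hasDerivAt_id t).const_mul (ε/2))
      exact this.congr_deriv (by simp)
    have hanti : AntitoneOn (fun t => g t + ε/2 * t) (Set.Icc a c) := by
      apply antitoneOn_of_deriv_nonpos (convex_Icc a c)
      · exact fun t ht => (hd t (ha0.trans ht.1)).continuousAt.continuousWithinAt
      · intro t ht
        rw [interior_Icc] at ht
        exact ((hd t (ha0.trans ht.1.le)).differentiableAt).differentiableWithinAt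
      · intro t ht
        rw [interior_Icc] at ht
        rw [(hd t (ha0.trans ht.1.le)).deriv]
        have := hWball (x t) (hball t (Set.Ioo_subset_Icc_self ht))
        linarith
    exact hanti ⟨le_rfl, hac⟩ ⟨hac, le_rfl⟩ hac
  -- the exit set
  set S : Set ℝ := {s | s ∈ Set.Icc a b ∧ δ/2 ≤ dist (x s) p} with hSdef
  by_cases hS : S.Nonempty
  · -- there is an exit time; get contradiction
    have hbdd : BddBelow S := ⟨a, fun s hs => hs.1.1⟩
    obtain ⟨u, -, hu_tend, hu_mem⟩ := exists_seq_tendsto_sInf hS hbdd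
    set T : ℝ := sInf S with hTdef
    have haT' : a ≤ T := le_csInf hS fun s hs => hs.1.1
    have hTb : T ≤ b := (csInf_le hbdd (hu_mem 0)).trans (hu_mem 0).1.2
    have hT0 : 0 ≤ T := ha0.trans haT'
    have hxT : ContinuousAt x T := (hode T hT0).continuousAt
    have hdistT : ContinuousAt (fun t => dist (x t) p) T := hxT.dist continuousAt_const
    have hTdist : δ/2 ≤ dist (x T) p := by
      refine ge_of_tendsto (Filter.Tendsto.comp hdistT hu_tend) ?_
      exact Filter.Eventually.of_forall fun k => (hu_mem k).2
    have hTS : T ∈ S := ⟨⟨haT', hTb⟩, hTdist⟩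
    have haS : a ∉ S := fun hc => absurd hc.2 (by push_neg; linarith)
    have haT : a < T := lt_of_le_of_ne haT' (fun hc => haS (hc ▸ hTS))
    -- before T the trajectory is within δ/2
    have hbefore : ∀ t, a ≤ t → t < T → dist (x t) p < δ/2 := by
      intro t hat htT
      by_contra hc
      push_neg at hc
      exact absurd (csInf_le hbdd ⟨⟨hat, htT.le.trans hTb⟩, hc⟩) (not_le.mpr htT)
    have hTle : dist (x T) p ≤ δ/2 := by
      have hcl : T ∈ closure (Set.Ico a T) := by
        rw [closure_Ico (ne_of_lt haT)]
        exact ⟨haT.le, le_rfl⟩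
      haveI := mem_closure_iff_nhdsWithin_neBot.mp hcl
      refine le_of_tendsto (hdistT.continuousWithinAt :
        ContinuousWithinAt (fun t => dist (x t) p) (Set.Ico a T) T) ?_
      filter_upwards [self_mem_nhdsWithin] with t ht
      exact (hbefore t ht.1 ht.2).le
    have hball : ∀ s ∈ Set.Icc a T, x s ∈ Metric.closedBall p δ := by
      intro s hs
      rcases lt_or_eq_of_le hs.2 with hlt | heq
      · exact Metric.mem_closedBall.mpr (by linarith [hbefore s hs.1 hlt])
      · rw [heq]; exact Metric.mem_closedBall.mpr (by linarith)
    -- T - a ≥ h via speed bound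
    have hnorm : ‖x T - x a‖ ≤ M * ‖T - a‖ := by
      refine Convex.norm_image_sub_le_of_norm_hasDerivWithin_le
        (fun t ht => (hode t (ha0.trans ht.1)).hasDerivWithinAt)
        (fun t ht => hMb (x t) (hball t ht)) (convex_Icc a T)
        ⟨le_rfl, haT.le⟩ ⟨haT.le, le_rfl⟩
    have hd1 : δ/4 ≤ ‖x T - x a‖ := by
      have := abs_dist_sub_le (x T) (x a) p
      rw [← dist_eq_norm]
      have h1' : dist (x a) p < δ/4 := h1
      have := le_trans (le_abs_self _) this
      linarith [hTdist]
    have hTa : h ≤ T - a := by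
      have hTa' : ‖T - a‖ = T - a := by
        rw [Real.norm_eq_abs, abs_of_nonneg (by linarith)]
      rw [hTa'] at hnorm
      have : δ/4 ≤ M * (T - a) := le_trans hd1 hnorm
      rw [hhdef]
      rw [div_le_iff₀ (by positivity)]
      linarith [this]
    -- but V decrease forces T - a < h
    have hkey := key T haT.le hball
    have hlowT := hlow T hT0
    nlinarith [hε, hTa, hkey, hlowT, h2]
  · -- trajectory stays within δ/2 on [a, b]; V drops below V p
    rw [Set.not_nonempty_iff_eq_empty] at hS
    have hball : ∀ s ∈ Set.Icc a b, x s ∈ Metric.closedBall p δ := by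
      intro s hs
      have : s ∉ S := by rw [hS]; exact Set.notMem_empty s
      rw [hSdef] at this
      simp only [Set.mem_setOf_eq, not_and, not_le] at this
      exact Metric.mem_closedBall.mpr (by linarith [this hs])
    have hkey := key b (by linarith) hball
    have hlowb := hlow b (by linarith)
    nlinarith [hε, hkey, hlowb, h2]
end
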